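/- Lemma 4.1. Suppose the weights v, w satisfy ⟨v⟩_I ⟨w⟩_I ≤ 1 for all I ∈ 𝒟, and fix q ∈ (0,1). For k = 0, 1, 2, … let ℱ_k := { I ∈ 𝒟 : q^{k+1} ≤ ⟨v⟩_I ⟨w⟩_I ≤ q^k }. Then there exists a constant B = B(q) < ∞, independent of k, such that for every k ≥ 0 and every J ∈ 𝒟: Σ_{I ∈ ℱ_k, I ⊆ J} (|⟨v⟩_{I_-} − ⟨v⟩_{I_+}|/⟨v⟩_I) · (|⟨w⟩_{I_-} − ⟨w⟩_{I_+}|/⟨w⟩_I) · |I| ≤ B |J| (i.e. the measures σ_k := Σ_{I∈ℱ_k} (|⟨v⟩_{I_-}−⟨v⟩_{I_+}|/⟨v⟩_I)(|⟨w⟩_{I_-}−⟨w⟩_{I_+}|/⟨w⟩_I)|I| δ_{c(I)} are uniformly Carleson). -/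

import Mathlib

/-!
Lemma 4.1: for weights with `⟨v⟩_I ⟨w⟩_I ≤ 1` and `q ∈ (0,1)`, the measures
`σ_k` built over the families `ℱ_k = {I : q^{k+1} ≤ ⟨v⟩_I⟨w⟩_I ≤ q^k}` are
uniformly Carleson.
-/

open MeasureTheory Set
open scoped ENNReal Classical

noncomputable section

/-- The dyadic interval `[k/2^n, (k+1)/2^n)`. -/
def dyad (n k : ℕ) : Set ℝ := Set.Ico ((k : ℝ) / 2 ^ n) (((k : ℝ) + 1) / 2 ^ n)

/-- The length of a dyadic interval of generation `n`. -/
def dlen (n : ℕ) : ℝ := ((1 : ℝ) / 2) ^ n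

/-- The average `⟨u⟩_I` of `u` over the dyadic interval `I = dyad n k`. -/
def davg (u : ℝ → ℝ) (n k : ℕ) : ℝ := (2 : ℝ) ^ n * ∫ x in dyad n k, u x

/-- A weight: integrable on `[0,1)` and a.e. positive there. -/
def IsWeight (u : ℝ → ℝ) : Prop :=
  IntegrableOn u (Set.Ico (0 : ℝ) 1) ∧
    ∀ᵐ x ∂(volume.restrict (Set.Ico (0 : ℝ) 1)), 0 < u x

namespace L41

lemma two_pow_pos' (n : ℕ) : (0:ℝ) < 2 ^ n := by positivity

lemma dlen_pos (n : ℕ) : 0 < dlen n := by unfold dlen; positivity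

lemma dlen_succ (m : ℕ) : dlen (m+1) = dlen m / 2 := by unfold dlen; ring

lemma dyad_nonempty (n i : ℕ) : (dyad n i).Nonempty := by
  refine Set.nonempty_Ico.2 ?_
  have h := two_pow_pos' n
  rw [div_lt_div_iff₀ h h]
  nlinarith

/-- The fourth root. -/
def phi4 (z : ℝ) : ℝ := Real.sqrt (Real.sqrt z)

lemma phi4_nonneg (z : ℝ) : 0 ≤ phi4 z := Real.sqrt_nonneg _

lemma phi4_mul {a : ℝ} (ha : 0 ≤ a) (b : ℝ) : phi4 (a * b) = phi4 a * phi4 b := by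
  unfold phi4
  rw [Real.sqrt_mul ha, Real.sqrt_mul (Real.sqrt_nonneg a)]

lemma phi4_mono {a b : ℝ} (h : a ≤ b) : phi4 a ≤ phi4 b :=
  Real.sqrt_le_sqrt (Real.sqrt_le_sqrt h)

lemma phi4_pow (a : ℝ) (ha : 0 ≤ a) (k : ℕ) : phi4 (a ^ k) = phi4 a ^ k := by
  induction k with
  | zero => simp [phi4]
  | succ k ih =>
    rw [pow_succ, pow_succ, phi4_mul (pow_nonneg ha k), ih]

lemma phi4_pos {a : ℝ} (ha : 0 < a) : 0 < phi4 a :=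
  Real.sqrt_pos.2 (Real.sqrt_pos.2 ha)

lemma sqrt4_sq (a : ℝ) : (phi4 a)^2 = Real.sqrt a := Real.sq_sqrt (Real.sqrt_nonneg a)

lemma phi4_le (P : ℝ) (h0 : 0 ≤ P) (h1 : P ≤ 1) : phi4 P ≤ (3+P)/4 := by
  have h2 : Real.sqrt P ≤ (1+P)/2 := by
    calc Real.sqrt P ≤ Real.sqrt (((1+P)/2)^2) := Real.sqrt_le_sqrt (by nlinarith [sq_nonneg (1-P)])
      _ = (1+P)/2 := Real.sqrt_sq (by linarith)
  calc phi4 P = Real.sqrt (Real.sqrt P) := rfl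
    _ ≤ Real.sqrt ((1+P)/2) := Real.sqrt_le_sqrt h2
    _ ≤ Real.sqrt (((3+P)/4)^2) := Real.sqrt_le_sqrt (by nlinarith [sq_nonneg (1-P)])
    _ = (3+P)/4 := Real.sqrt_sq (by linarith)

set_option maxHeartbeats 1000000 in
/-- The core elementary inequality. -/
lemma star_ineq (s t : ℝ) (hs : |s| ≤ 1) (ht : |t| ≤ 1) :
    phi4 ((1+s)*(1+t)) + phi4 ((1-s)*(1-t)) ≤ 2 - |s*t|/8 := by
  have hs1 : -1 ≤ s := neg_le_of_abs_le hs
  have hs2 : s ≤ 1 := le_of_abs_le hs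
  have ht1 : -1 ≤ t := neg_le_of_abs_le ht
  have ht2 : t ≤ 1 := le_of_abs_le ht
  have hss : s^2 ≤ 1 := by nlinarith [sq_abs s, abs_nonneg s]
  have htt : t^2 ≤ 1 := by nlinarith [sq_abs t, abs_nonneg t]
  have hu0 : 0 ≤ phi4 ((1+s)*(1+t)) := phi4_nonneg _
  have hv0 : 0 ≤ phi4 ((1-s)*(1-t)) := phi4_nonneg _
  have hu2 : phi4 ((1+s)*(1+t)) ^ 2 ≤ (2+s+t)/2 := by
    rw [sqrt4_sq]
    calc Real.sqrt ((1+s)*(1+t)) ≤ Real.sqrt (((2+s+t)/2)^2) :=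
          Real.sqrt_le_sqrt (by nlinarith [sq_nonneg (s - t)])
      _ = (2+s+t)/2 := Real.sqrt_sq (by linarith)
  have hv2 : phi4 ((1-s)*(1-t)) ^ 2 ≤ (2-s-t)/2 := by
    rw [sqrt4_sq]
    calc Real.sqrt ((1-s)*(1-t)) ≤ Real.sqrt (((2-s-t)/2)^2) :=
          Real.sqrt_le_sqrt (by nlinarith [sq_nonneg (s - t)])
      _ = (2-s-t)/2 := Real.sqrt_sq (by linarith)
  have huv : phi4 ((1+s)*(1+t)) * phi4 ((1-s)*(1-t)) = phi4 ((1-s^2)*(1-t^2)) := by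
    rw [← phi4_mul (by nlinarith : (0:ℝ) ≤ (1+s)*(1+t))]
    congr 1
    ring
  have hP0 : (0:ℝ) ≤ (1-s^2)*(1-t^2) := by nlinarith
  have hP1 : (1-s^2)*(1-t^2) ≤ 1 := by nlinarith
  have hkey : phi4 ((1-s^2)*(1-t^2)) ≤ (3+(1-s^2)*(1-t^2))/4 := phi4_le _ hP0 hP1
  have hE : |s*t| ≤ 1 - (1-s^2)*(1-t^2) := by
    rw [abs_mul]
    nlinarith [sq_abs s, sq_abs t, abs_nonneg s, abs_nonneg t,
      sq_nonneg (|s| - |t|), mul_nonneg (abs_nonneg s) (abs_nonneg t),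
      mul_le_one₀ hs (abs_nonneg t) ht]
  have hst0 : 0 ≤ |s*t| := abs_nonneg _
  have hst1 : |s*t| ≤ 1 := by rw [abs_mul]; exact mul_le_one₀ hs (abs_nonneg t) ht
  have hsq : (phi4 ((1+s)*(1+t)) + phi4 ((1-s)*(1-t)))^2 ≤ 4 - |s*t|/2 := by
    nlinarith [hu2, hv2, huv, hkey, hE]
  have hpos : 0 ≤ phi4 ((1+s)*(1+t)) + phi4 ((1-s)*(1-t)) + 2 - |s*t|/8 := by linarith
  nlinarith [hsq, hpos, sq_nonneg (|s*t|)]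

lemma aux_div (T P D c d : ℝ) (hc : 0 < c) (h1 : T * P ≤ 64 * D) (h2 : c ≤ P)
    (hT : 0 ≤ T) (hd : 0 ≤ d) (hD : 0 ≤ D) : T * d ≤ 64 / c * (D * d) := by
  have hTle : T * c ≤ 64 * D := by nlinarith [mul_le_mul_of_nonneg_left h2 hT]
  rw [div_mul_eq_mul_div, le_div_iff₀ hc]
  nlinarith [mul_le_mul_of_nonneg_right hTle hd]

set_option maxHeartbeats 1000000 in
/-- The core inequality in the form of averages. -/
lemma core' (x1 x2 y1 y2 : ℝ) (hx1 : 0 < x1) (hx2 : 0 < x2) (hy1 : 0 < y1) (hy2 : 0 < y2) :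
    (|x1 - x2| / ((x1+x2)/2)) * (|y1 - y2| / ((y1+y2)/2)) * phi4 (((x1+x2)/2) * ((y1+y2)/2))
      ≤ 64 * (phi4 (((x1+x2)/2) * ((y1+y2)/2)) - (phi4 (x1*y1) + phi4 (x2*y2))/2) := by
  obtain ⟨x, hxdef⟩ : ∃ x, x = (x1+x2)/2 := ⟨_, rfl⟩
  obtain ⟨y, hydef⟩ : ∃ y, y = (y1+y2)/2 := ⟨_, rfl⟩
  have hx : 0 < x := by rw [hxdef]; linarith
  have hy : 0 < y := by rw [hydef]; linarith
  obtain ⟨s, hsdef⟩ : ∃ s, s = (x1-x2)/(2*x) := ⟨_, rfl⟩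
  obtain ⟨t, htdef⟩ : ∃ t, t = (y1-y2)/(2*y) := ⟨_, rfl⟩
  have hx1' : x1 = x*(1+s) := by rw [hsdef]; field_simp; rw [hxdef]; ring
  have hx2' : x2 = x*(1-s) := by rw [hsdef]; field_simp; rw [hxdef]; ring
  have hy1' : y1 = y*(1+t) := by rw [htdef]; field_simp; rw [hydef]; ring
  have hy2' : y2 = y*(1-t) := by rw [htdef]; field_simp; rw [hydef]; ring
  have hs : |s| ≤ 1 := by
    rw [hsdef, abs_div, abs_of_pos (by linarith : (0:ℝ) < 2*x), div_le_one (by linarith)]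
    rw [abs_le]
    constructor <;> nlinarith [abs_nonneg (x1 - x2), le_abs_self (x1 - x2), neg_abs_le (x1 - x2)]
  have ht : |t| ≤ 1 := by
    rw [htdef, abs_div, abs_of_pos (by linarith : (0:ℝ) < 2*y), div_le_one (by linarith)]
    rw [abs_le]
    constructor <;> nlinarith [abs_nonneg (y1 - y2), le_abs_self (y1 - y2), neg_abs_le (y1 - y2)]
  have habs : |x1 - x2| / x = 2 * |s| := by
    rw [hsdef, abs_div, abs_of_pos (by linarith : (0:ℝ) < 2*x)]
    field_simp
  have habt : |y1 - y2| / y = 2 * |t| := by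
    rw [htdef, abs_div, abs_of_pos (by linarith : (0:ℝ) < 2*y)]
    field_simp
  have hxy : 0 ≤ x * y := by positivity
  have hphi1 : phi4 (x1*y1) = phi4 (x*y) * phi4 ((1+s)*(1+t)) := by
    rw [hx1', hy1', ← phi4_mul hxy]
    congr 1
    ring
  have hphi2 : phi4 (x2*y2) = phi4 (x*y) * phi4 ((1-s)*(1-t)) := by
    rw [hx2', hy2', ← phi4_mul hxy]
    congr 1
    ring
  rw [← hxdef, ← hydef, habs, habt, hphi1, hphi2]
  have hg : 2 * |s| * (2 * |t|) = 4 * |s*t| := by rw [abs_mul]; ring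
  rw [hg]
  have hstar := star_ineq s t hs ht
  have hphi0 : 0 ≤ phi4 (x*y) := phi4_nonneg _
  nlinarith [mul_le_mul_of_nonneg_left hstar hphi0, abs_nonneg (s*t),
    mul_nonneg hphi0 (abs_nonneg (s*t))]

/-! ### Dyadic geometry -/

lemma dyad_union (m j : ℕ) : dyad m j = dyad (m+1) (2*j) ∪ dyad (m+1) (2*j+1) := by
  unfold dyad
  push_cast
  rw [show ((j:ℝ))/2^m = (2*(j:ℝ))/2^(m+1) by ring,
      show ((j:ℝ)+1)/2^m = (2*(j:ℝ)+1+1)/2^(m+1) by ring,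
      Set.Ico_union_Ico_eq_Ico]
  · have h := two_pow_pos' (m+1)
    rw [div_le_div_iff₀ h h]; nlinarith
  · have h := two_pow_pos' (m+1)
    rw [div_le_div_iff₀ h h]; nlinarith

lemma dyad_disjoint (m j : ℕ) : Disjoint (dyad (m+1) (2*j)) (dyad (m+1) (2*j+1)) := by
  unfold dyad
  have : (((2*j:ℕ):ℝ)+1) / 2^(m+1) = ((2*j+1:ℕ):ℝ) / 2^(m+1) := by push_cast; ring
  rw [this]
  exact Set.Ico_disjoint_Ico_same

lemma dyad_left_subset (m j : ℕ) : dyad (m+1) (2*j) ⊆ dyad m j := by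
  rw [dyad_union m j]; exact Set.subset_union_left

lemma dyad_right_subset (m j : ℕ) : dyad (m+1) (2*j+1) ⊆ dyad m j := by
  rw [dyad_union m j]; exact Set.subset_union_right

lemma dyad_subset_iff {n i m j : ℕ} :
    dyad n i ⊆ dyad m j ↔ j * 2^n ≤ i * 2^m ∧ (i+1) * 2^m ≤ (j+1) * 2^n := by
  unfold dyad
  have hlt : (i:ℝ)/2^n < ((i:ℝ)+1)/2^n := by
    have h := two_pow_pos' n
    rw [div_lt_div_iff₀ h h]; nlinarith
  rw [Set.Ico_subset_Ico_iff hlt]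
  constructor
  · rintro ⟨h1, h2⟩
    constructor
    · have := (div_le_div_iff₀ (two_pow_pos' m) (two_pow_pos' n)).1 h1
      exact_mod_cast this
    · have := (div_le_div_iff₀ (two_pow_pos' n) (two_pow_pos' m)).1 h2
      exact_mod_cast this
  · rintro ⟨h1, h2⟩
    constructor
    · rw [div_le_div_iff₀ (two_pow_pos' m) (two_pow_pos' n)]
      exact_mod_cast h1
    · rw [div_le_div_iff₀ (two_pow_pos' n) (two_pow_pos' m)]
      push_cast
      exact_mod_cast h2

lemma gen_le_of_subset {n i m j : ℕ} (h : dyad n i ⊆ dyad m j) : m ≤ n := by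
  obtain ⟨h1, h2⟩ := dyad_subset_iff.1 h
  have h2' : i * 2^m + 2^m ≤ j * 2^n + 2^n := by
    have : (i+1) * 2^m = i * 2^m + 2^m := by ring
    have e2 : (j+1) * 2^n = j * 2^n + 2^n := by ring
    omega
  have : (2:ℕ)^m ≤ 2^n := by omega
  exact (Nat.pow_le_pow_iff_right (by norm_num)).1 this

lemma eq_of_subset_same {m i j : ℕ} (h : dyad m i ⊆ dyad m j) : i = j := by
  obtain ⟨h1, h2⟩ := dyad_subset_iff.1 h
  have hp : 0 < (2:ℕ)^m := Nat.pow_pos (by norm_num)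
  have e1 : j ≤ i := Nat.le_of_mul_le_mul_right (by omega) hp
  have e2 : i + 1 ≤ j + 1 := Nat.le_of_mul_le_mul_right (by omega) hp
  omega

lemma dyad_trichotomy {n i m j : ℕ} (h : dyad n i ⊆ dyad m j) :
    (n = m ∧ i = j) ∨ dyad n i ⊆ dyad (m+1) (2*j) ∨ dyad n i ⊆ dyad (m+1) (2*j+1) := by
  have hmn := gen_le_of_subset h
  obtain ⟨h1, h2⟩ := dyad_subset_iff.1 h
  rcases eq_or_lt_of_le hmn with he | hlt
  · left
    subst he
    exact ⟨rfl, eq_of_subset_same h⟩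
  · -- m + 1 ≤ n
    have hm1 : m + 1 ≤ n := hlt
    rcases le_or_gt ((i+1) * 2^(m+1)) ((2*j+1) * 2^n) with hc | hc
    · right; left
      refine dyad_subset_iff.2 ⟨?_, hc⟩
      -- (2j)*2^n ≤ i*2^(m+1)
      have : 2*j * 2^n = (j * 2^n) * 2 := by ring
      have e2 : i * 2^(m+1) = (i * 2^m) * 2 := by ring
      omega
    · right; right
      refine dyad_subset_iff.2 ⟨?_, ?_⟩
      · -- (2j+1)*2^n ≤ i*2^(m+1)
        obtain ⟨d, hd⟩ : ∃ d, n = d + (m+1) := ⟨n - (m+1), by omega⟩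
        subst hd
        have e : (2*j+1) * 2^(d+(m+1)) = ((2*j+1) * 2^d) * 2^(m+1) := by
          rw [pow_add]; ring
        rw [e] at hc ⊢
        have h3 : (2*j+1) * 2^d < i + 1 := by
          by_contra hcon
          push_neg at hcon
          have h5 : (i+1) * 2^(m+1) ≤ ((2*j+1) * 2^d) * 2^(m+1) :=
            Nat.mul_le_mul_right _ hcon
          linarith
        have h4 : (2*j+1) * 2^d ≤ i := by omega
        exact Nat.mul_le_mul_right _ h4
      · -- (i+1)*2^(m+1) ≤ (2j+1+1)*2^n
        have e1 : (2*j+1+1) * 2^n = ((j+1) * 2^n) * 2 := by ring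
        have e2 : (i+1) * 2^(m+1) = ((i+1) * 2^m) * 2 := by ring
        omega

lemma dyad_not_subset_left (m j : ℕ) : ¬ dyad m j ⊆ dyad (m+1) (2*j) := by
  intro h
  have := gen_le_of_subset h
  omega

lemma dyad_not_subset_right (m j : ℕ) : ¬ dyad m j ⊆ dyad (m+1) (2*j+1) := by
  intro h
  have := gen_le_of_subset h
  omega

/-! ### Averages -/

lemma davg_split {u : ℝ → ℝ} (hu : IntegrableOn u (Set.Ico (0:ℝ) 1)) {m j : ℕ}
    (hs : dyad m j ⊆ Set.Ico (0:ℝ) 1) :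
    davg u m j = (davg u (m+1) (2*j) + davg u (m+1) (2*j+1)) / 2 := by
  have hil : IntegrableOn u (dyad (m+1) (2*j)) := hu.mono_set ((dyad_left_subset m j).trans hs)
  have hir : IntegrableOn u (dyad (m+1) (2*j+1)) := hu.mono_set ((dyad_right_subset m j).trans hs)
  have key : ∫ x in dyad m j, u x
      = (∫ x in dyad (m+1) (2*j), u x) + ∫ x in dyad (m+1) (2*j+1), u x := by
    rw [dyad_union m j]
    exact setIntegral_union (dyad_disjoint m j) measurableSet_Ico hil hir
  unfold davg
  rw [key]
  ring

lemma dyad_volume_pos (m j : ℕ) : 0 < volume (dyad m j) := by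
  unfold dyad
  rw [Real.volume_Ico]
  apply ENNReal.ofReal_pos.2
  have h := two_pow_pos' m
  rw [show ((j:ℝ)+1)/2^m - (j:ℝ)/2^m = 1/2^m by ring]
  positivity

lemma davg_pos {u : ℝ → ℝ} (hu : IsWeight u) {m j : ℕ} (hs : dyad m j ⊆ Set.Ico (0:ℝ) 1) :
    0 < davg u m j := by
  obtain ⟨hint, hpos⟩ := hu
  have hir : IntegrableOn u (dyad m j) := hint.mono_set hs
  have hposd : ∀ᵐ x ∂(volume.restrict (dyad m j)), 0 < u x :=
    ae_restrict_of_ae_restrict_of_subset hs hpos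
  have h0 : 0 < ∫ x in dyad m j, u x := by
    rw [setIntegral_pos_iff_support_of_nonneg_ae (hposd.mono fun x hx => hx.le) hir]
    have hnull : volume.restrict (dyad m j) {x | ¬ 0 < u x} = 0 := by
      rw [← MeasureTheory.ae_iff] at *
      exact hposd
    have hnull2 : volume ({x | ¬ 0 < u x} ∩ dyad m j) = 0 :=
      le_antisymm (hnull ▸ Measure.le_restrict_apply _ _) zero_le
    have hcover : dyad m j ⊆ ({x | ¬ 0 < u x} ∩ dyad m j) ∪ (Function.support u ∩ dyad m j) := by
      intro x hx
      by_cases hux : 0 < u x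
      · exact Or.inr ⟨fun h0 => by simp [h0] at hux, hx⟩
      · exact Or.inl ⟨hux, hx⟩
    by_contra hc
    push_neg at hc
    have hc0 : volume (Function.support u ∩ dyad m j) = 0 := le_antisymm hc zero_le
    have : volume (dyad m j) = 0 := by
      refine le_antisymm ?_ zero_le
      calc volume (dyad m j) ≤ volume (({x | ¬ 0 < u x} ∩ dyad m j) ∪ (Function.support u ∩ dyad m j)) :=
            measure_mono hcover
        _ ≤ volume ({x | ¬ 0 < u x} ∩ dyad m j) + volume (Function.support u ∩ dyad m j) :=
            measure_union_le _ _
        _ = 0 := by rw [hnull2, hc0, add_zero]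
    exact absurd this (dyad_volume_pos m j).ne'
  unfold davg
  have := two_pow_pos' m
  positivity

/-! ### The recursive dyadic sum -/

def Ssum (F : ℕ → ℕ → ℝ) : ℕ → ℕ → ℕ → ℝ
  | 0, m, j => F m j
  | N+1, m, j => F m j + Ssum F N (m+1) (2*j) + Ssum F N (m+1) (2*j+1)

lemma Ssum_mono {F G : ℕ → ℕ → ℝ}
    (h : ∀ n i, dyad n i ⊆ Set.Ico (0:ℝ) 1 → F n i ≤ G n i) :
    ∀ N m j, dyad m j ⊆ Set.Ico (0:ℝ) 1 → Ssum F N m j ≤ Ssum G N m j := by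
  intro N
  induction N with
  | zero => intro m j hs; exact h m j hs
  | succ N ih =>
    intro m j hs
    have hl := ih (m+1) (2*j) ((dyad_left_subset m j).trans hs)
    have hr := ih (m+1) (2*j+1) ((dyad_right_subset m j).trans hs)
    have h0 := h m j hs
    simp only [Ssum]
    linarith

lemma Ssum_const_mul (c : ℝ) (F : ℕ → ℕ → ℝ) :
    ∀ N m j, Ssum (fun n i => c * F n i) N m j = c * Ssum F N m j := by
  intro N
  induction N with
  | zero => intro m j; rfl
  | succ N ih =>
    intro m j
    simp only [Ssum, ih]
    ring

lemma Ssum_tele (Φ : ℕ → ℕ → ℝ) (hΦ0 : ∀ n i, dyad n i ⊆ Set.Ico (0:ℝ) 1 → 0 ≤ Φ n i) :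
    ∀ N m j, dyad m j ⊆ Set.Ico (0:ℝ) 1 →
      Ssum (fun n i => (Φ n i - (Φ (n+1) (2*i) + Φ (n+1) (2*i+1))/2) * dlen n) N m j
        ≤ Φ m j * dlen m := by
  intro N
  induction N with
  | zero =>
    intro m j hs
    have hl := hΦ0 (m+1) (2*j) ((dyad_left_subset m j).trans hs)
    have hr := hΦ0 (m+1) (2*j+1) ((dyad_right_subset m j).trans hs)
    have hd := (dlen_pos m).le
    simp only [Ssum]
    nlinarith
  | succ N ih =>
    intro m j hs
    have hl := ih (m+1) (2*j) ((dyad_left_subset m j).trans hs)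
    have hr := ih (m+1) (2*j+1) ((dyad_right_subset m j).trans hs)
    simp only [Ssum]
    rw [dlen_succ] at hl hr
    linarith

lemma sum_le_Ssum (F : ℕ → ℕ → ℝ) :
    ∀ (N m j : ℕ) (G : Finset (ℕ×ℕ)),
      (∀ p ∈ G, dyad p.1 p.2 ⊆ dyad m j ∧ p.1 ≤ m + N) →
      (∀ n i, dyad n i ⊆ dyad m j → 0 ≤ F n i) →
      ∑ p ∈ G, F p.1 p.2 ≤ Ssum F N m j := by
  intro N
  induction N with
  | zero =>
    intro m j G hG hF
    have hsub : G ⊆ {(m, j)} := by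
      intro p hp
      obtain ⟨hs, hle⟩ := hG p hp
      have hm := gen_le_of_subset hs
      have h1 : p.1 = m := by omega
      rw [Finset.mem_singleton]
      have hs2 := hs
      rw [h1] at hs2
      have h2 : p.2 = j := eq_of_subset_same hs2
      exact Prod.ext h1 h2
    calc ∑ p ∈ G, F p.1 p.2 ≤ ∑ p ∈ ({(m,j)} : Finset (ℕ×ℕ)), F p.1 p.2 := by
          apply Finset.sum_le_sum_of_subset_of_nonneg hsub
          intro p hp _
          rw [Finset.mem_singleton] at hp
          subst hp
          exact hF m j subset_rfl
      _ = F m j := by simp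
      _ = Ssum F 0 m j := rfl
  | succ N ih =>
    intro m j G hG hF
    set P1 : ℕ×ℕ → Prop := fun p => dyad p.1 p.2 ⊆ dyad (m+1) (2*j) with hP1
    set P2 : ℕ×ℕ → Prop := fun p => dyad p.1 p.2 ⊆ dyad (m+1) (2*j+1) with hP2
    have hsplit1 : ∑ p ∈ G, F p.1 p.2
        = (∑ p ∈ G.filter P1, F p.1 p.2) + ∑ p ∈ G.filter (fun p => ¬ P1 p), F p.1 p.2 :=
      (Finset.sum_filter_add_sum_filter_not G P1 _).symm
    have hsplit2 : ∑ p ∈ G.filter (fun p => ¬ P1 p), F p.1 p.2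
        = (∑ p ∈ (G.filter (fun p => ¬ P1 p)).filter P2, F p.1 p.2)
          + ∑ p ∈ (G.filter (fun p => ¬ P1 p)).filter (fun p => ¬ P2 p), F p.1 p.2 :=
      (Finset.sum_filter_add_sum_filter_not _ P2 _).symm
    -- the remainder is contained in {(m,j)}
    have h0 : ∑ p ∈ (G.filter (fun p => ¬ P1 p)).filter (fun p => ¬ P2 p), F p.1 p.2 ≤ F m j := by
      have hsub : (G.filter (fun p => ¬ P1 p)).filter (fun p => ¬ P2 p) ⊆ {(m,j)} := by
        intro p hp
        simp only [Finset.mem_filter] at hp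
        obtain ⟨⟨hpG, hnp1⟩, hnp2⟩ := hp
        obtain ⟨hs, _⟩ := hG p hpG
        rcases dyad_trichotomy hs with ⟨h1, h2⟩ | hcase | hcase
        · rw [Finset.mem_singleton]; exact Prod.ext h1 h2
        · exact absurd hcase hnp1
        · exact absurd hcase hnp2
      calc _ ≤ ∑ p ∈ ({(m,j)} : Finset (ℕ×ℕ)), F p.1 p.2 := by
            apply Finset.sum_le_sum_of_subset_of_nonneg hsub
            intro p hp _
            rw [Finset.mem_singleton] at hp
            subst hp
            exact hF m j subset_rfl
        _ = F m j := by simp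
    have h1 : ∑ p ∈ G.filter P1, F p.1 p.2 ≤ Ssum F N (m+1) (2*j) := by
      apply ih
      · intro p hp
        rw [Finset.mem_filter] at hp
        obtain ⟨hpG, hp1⟩ := hp
        refine ⟨hp1, ?_⟩
        obtain ⟨_, hle⟩ := hG p hpG
        omega
      · intro n i hsub
        exact hF n i (hsub.trans (dyad_left_subset m j))
    have h2 : ∑ p ∈ (G.filter (fun p => ¬ P1 p)).filter P2, F p.1 p.2 ≤ Ssum F N (m+1) (2*j+1) := by
      apply ih
      · intro p hp
        simp only [Finset.mem_filter] at hp
        obtain ⟨⟨hpG, _⟩, hp2⟩ := hp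
        refine ⟨hp2, ?_⟩
        obtain ⟨_, hle⟩ := hG p hpG
        omega
      · intro n i hsub
        exact hF n i (hsub.trans (dyad_right_subset m j))
    have : Ssum F (N+1) m j = F m j + Ssum F N (m+1) (2*j) + Ssum F N (m+1) (2*j+1) := rfl
    rw [this, hsplit1, hsplit2]
    linarith

/-! ### The main Bellman induction -/

lemma main_bound (q : ℝ) (hq0 : 0 < q) (hq1 : q < 1) (v w : ℝ → ℝ)
    (hv : IsWeight v) (hw : IsWeight w) (k : ℕ) :
    ∀ N m j, dyad m j ⊆ Set.Ico (0:ℝ) 1 →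
      Ssum (fun n i =>
        if q ^ (k + 1) ≤ davg v n i * davg w n i ∧ davg v n i * davg w n i ≤ q ^ k then
          (|davg v (n + 1) (2 * i) - davg v (n + 1) (2 * i + 1)| / davg v n i) *
            (|davg w (n + 1) (2 * i) - davg w (n + 1) (2 * i + 1)| / davg w n i) * dlen n
        else 0) N m j ≤ (64 / Real.sqrt (Real.sqrt q)) * dlen m := by
  set q4 : ℝ := Real.sqrt (Real.sqrt q) with hq4def
  have hq4 : 0 < q4 := phi4_pos hq0
  set Φ : ℕ → ℕ → ℝ := fun n i => phi4 (davg v n i * davg w n i) with hΦdef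
  set Fk : ℕ → ℕ → ℝ := fun n i =>
    if q ^ (k + 1) ≤ davg v n i * davg w n i ∧ davg v n i * davg w n i ≤ q ^ k then
      (|davg v (n + 1) (2 * i) - davg v (n + 1) (2 * i + 1)| / davg v n i) *
        (|davg w (n + 1) (2 * i) - davg w (n + 1) (2 * i + 1)| / davg w n i) * dlen n
    else 0 with hFkdef
  -- the per-interval inequality
  have per : ∀ n i, dyad n i ⊆ Set.Ico (0:ℝ) 1 →
      (|davg v (n + 1) (2 * i) - davg v (n + 1) (2 * i + 1)| / davg v n i) *
        (|davg w (n + 1) (2 * i) - davg w (n + 1) (2 * i + 1)| / davg w n i) * Φ n i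
        ≤ 64 * (Φ n i - (Φ (n+1) (2*i) + Φ (n+1) (2*i+1))/2) := by
    intro n i hs
    have hx1 : 0 < davg v (n+1) (2*i) := davg_pos hv ((dyad_left_subset n i).trans hs)
    have hx2 : 0 < davg v (n+1) (2*i+1) := davg_pos hv ((dyad_right_subset n i).trans hs)
    have hy1 : 0 < davg w (n+1) (2*i) := davg_pos hw ((dyad_left_subset n i).trans hs)
    have hy2 : 0 < davg w (n+1) (2*i+1) := davg_pos hw ((dyad_right_subset n i).trans hs)
    have hxs := davg_split hv.1 hs
    have hys := davg_split hw.1 hs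
    have := core' (davg v (n+1) (2*i)) (davg v (n+1) (2*i+1))
      (davg w (n+1) (2*i)) (davg w (n+1) (2*i+1)) hx1 hx2 hy1 hy2
    simp only [hΦdef]
    rw [hxs, hys]
    exact this
  have hT0 : ∀ n i, dyad n i ⊆ Set.Ico (0:ℝ) 1 →
      0 ≤ (|davg v (n + 1) (2 * i) - davg v (n + 1) (2 * i + 1)| / davg v n i) *
        (|davg w (n + 1) (2 * i) - davg w (n + 1) (2 * i + 1)| / davg w n i) := by
    intro n i hs
    have h1 : 0 < davg v n i := davg_pos hv hs
    have h2 : 0 < davg w n i := davg_pos hw hs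
    positivity
  have hD0 : ∀ n i, dyad n i ⊆ Set.Ico (0:ℝ) 1 →
      0 ≤ Φ n i - (Φ (n+1) (2*i) + Φ (n+1) (2*i+1))/2 := by
    intro n i hs
    have hp := per n i hs
    have h1 := hT0 n i hs
    have h2 : 0 ≤ Φ n i := phi4_nonneg _
    nlinarith
  have hΦ0 : ∀ n i, dyad n i ⊆ Set.Ico (0:ℝ) 1 → 0 ≤ Φ n i := fun n i _ => phi4_nonneg _
  -- the case of an interval in the family: direct telescoping bound
  have case1 : ∀ N m j, dyad m j ⊆ Set.Ico (0:ℝ) 1 →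
      (q ^ (k + 1) ≤ davg v m j * davg w m j ∧ davg v m j * davg w m j ≤ q ^ k) →
      Ssum Fk N m j ≤ (64 / q4) * dlen m := by
    intro N m j hs hc
    set c : ℝ := 64 / q4 ^ (k+1) with hcdef
    have hc0 : 0 < c := by positivity
    have hmono : Ssum Fk N m j
        ≤ Ssum (fun n i => c * ((Φ n i - (Φ (n+1) (2*i) + Φ (n+1) (2*i+1))/2) * dlen n)) N m j := by
      apply Ssum_mono _ N m j hs
      intro n i hsub
      by_cases hcond : q ^ (k + 1) ≤ davg v n i * davg w n i ∧ davg v n i * davg w n i ≤ q ^ k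
      · have hFk : Fk n i =
            (|davg v (n + 1) (2 * i) - davg v (n + 1) (2 * i + 1)| / davg v n i) *
              (|davg w (n + 1) (2 * i) - davg w (n + 1) (2 * i + 1)| / davg w n i) * dlen n := by
          rw [hFkdef]; simp only [hcond, and_self, if_true]
        rw [hFk]
        have hΦlb : q4 ^ (k+1) ≤ Φ n i := by
          have : phi4 (q ^ (k+1)) ≤ Φ n i := phi4_mono hcond.1
          rwa [phi4_pow q hq0.le (k+1)] at this
        have hq4p : (0:ℝ) < q4 ^ (k+1) := by positivity
        have hp := per n i hsub
        have hT := hT0 n i hsub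
        have hD := hD0 n i hsub
        have hd := (dlen_pos n).le
        rw [hcdef]
        exact aux_div _ _ _ _ _ hq4p hp hΦlb hT hd hD
      · have hFk : Fk n i = 0 := by rw [hFkdef]; simp only [hcond, if_false]
        rw [hFk]
        have hD := hD0 n i hsub
        have hd := (dlen_pos n).le
        positivity
    have htele := Ssum_tele Φ hΦ0 N m j hs
    rw [Ssum_const_mul] at hmono
    have hΦub : Φ m j ≤ q4 ^ k := by
      have : Φ m j ≤ phi4 (q ^ k) := phi4_mono hc.2
      rwa [phi4_pow q hq0.le k] at this
    have hd := (dlen_pos m).le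
    calc Ssum Fk N m j ≤ c * Ssum (fun n i => (Φ n i - (Φ (n+1) (2*i) + Φ (n+1) (2*i+1))/2) * dlen n) N m j := hmono
      _ ≤ c * (Φ m j * dlen m) := by
          apply mul_le_mul_of_nonneg_left htele hc0.le
      _ ≤ c * (q4 ^ k * dlen m) := by
          apply mul_le_mul_of_nonneg_left _ hc0.le
          exact mul_le_mul_of_nonneg_right hΦub hd
      _ = (64 / q4) * dlen m := by
          rw [hcdef]
          field_simp
          ring
  -- the main induction
  intro N
  induction N with
  | zero =>
    intro m j hs
    by_cases hc : q ^ (k + 1) ≤ davg v m j * davg w m j ∧ davg v m j * davg w m j ≤ q ^ k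
    · exact case1 0 m j hs hc
    · have : Ssum Fk 0 m j = Fk m j := rfl
      rw [this, hFkdef]
      simp only [hc, if_false]
      have := dlen_pos m
      positivity
  | succ N ih =>
    intro m j hs
    by_cases hc : q ^ (k + 1) ≤ davg v m j * davg w m j ∧ davg v m j * davg w m j ≤ q ^ k
    · exact case1 (N+1) m j hs hc
    · have hrec : Ssum Fk (N+1) m j = Fk m j + Ssum Fk N (m+1) (2*j) + Ssum Fk N (m+1) (2*j+1) := rfl
      have hFk : Fk m j = 0 := by rw [hFkdef]; simp only [hc, if_false]
      have hl := ih (m+1) (2*j) ((dyad_left_subset m j).trans hs)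
      have hr := ih (m+1) (2*j+1) ((dyad_right_subset m j).trans hs)
      rw [hrec, hFk]
      rw [dlen_succ] at hl hr
      linarith

lemma dyad_subset_Ico (m j : ℕ) (hj : j < 2^m) : dyad m j ⊆ Set.Ico (0:ℝ) 1 := by
  unfold dyad
  apply Set.Ico_subset_Ico
  · positivity
  · rw [div_le_one (two_pow_pos' m)]
    have : (j:ℝ) + 1 ≤ (2:ℝ)^m := by
      have : (j + 1 : ℕ) ≤ 2^m := hj
      exact_mod_cast this
    linarith

end L41

/-- Lemma 4.1. -/
theorem lemma_4_1 (q : ℝ) (hq0 : 0 < q) (hq1 : q < 1)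
    (v w : ℝ → ℝ) (hv : IsWeight v) (hw : IsWeight w)
    (hA2 : ∀ n k : ℕ, k < 2 ^ n → davg v n k * davg w n k ≤ 1) :
    ∃ B : ℝ, 0 ≤ B ∧
      ∀ k m j : ℕ, j < 2 ^ m →
        (∑' p : ℕ × ℕ,
            if dyad p.1 p.2 ⊆ dyad m j ∧
                q ^ (k + 1) ≤ davg v p.1 p.2 * davg w p.1 p.2 ∧
                davg v p.1 p.2 * davg w p.1 p.2 ≤ q ^ k then
              ENNReal.ofReal
                ((|davg v (p.1 + 1) (2 * p.2) - davg v (p.1 + 1) (2 * p.2 + 1)| /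
                    davg v p.1 p.2) *
                  (|davg w (p.1 + 1) (2 * p.2) - davg w (p.1 + 1) (2 * p.2 + 1)| /
                    davg w p.1 p.2) * dlen p.1)
            else 0) ≤
          ENNReal.ofReal (B * dlen m) := by
  classical
  refine ⟨64 / Real.sqrt (Real.sqrt q), by positivity, ?_⟩
  intro k m j hj
  set B : ℝ := 64 / Real.sqrt (Real.sqrt q) with hBdef
  have hB0 : 0 ≤ B := by positivity
  set f : ℕ × ℕ → ℝ≥0∞ := fun p =>
    if dyad p.1 p.2 ⊆ dyad m j ∧
        q ^ (k + 1) ≤ davg v p.1 p.2 * davg w p.1 p.2 ∧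
        davg v p.1 p.2 * davg w p.1 p.2 ≤ q ^ k then
      ENNReal.ofReal
        ((|davg v (p.1 + 1) (2 * p.2) - davg v (p.1 + 1) (2 * p.2 + 1)| /
            davg v p.1 p.2) *
          (|davg w (p.1 + 1) (2 * p.2) - davg w (p.1 + 1) (2 * p.2 + 1)| /
            davg w p.1 p.2) * dlen p.1)
    else 0 with hfdef
  have hmj : dyad m j ⊆ Set.Ico (0:ℝ) 1 := L41.dyad_subset_Ico m j hj
  set Fk : ℕ → ℕ → ℝ := fun n i =>
    if q ^ (k + 1) ≤ davg v n i * davg w n i ∧ davg v n i * davg w n i ≤ q ^ k then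
      (|davg v (n + 1) (2 * i) - davg v (n + 1) (2 * i + 1)| / davg v n i) *
        (|davg w (n + 1) (2 * i) - davg w (n + 1) (2 * i + 1)| / davg w n i) * dlen n
    else 0 with hFkdef
  have hFk0 : ∀ n i, dyad n i ⊆ dyad m j → 0 ≤ Fk n i := by
    intro n i hsub
    rw [hFkdef]
    by_cases hc : q ^ (k + 1) ≤ davg v n i * davg w n i ∧ davg v n i * davg w n i ≤ q ^ k
    · simp only [hc, and_self, if_true]
      have h1 : 0 < davg v n i := L41.davg_pos hv (hsub.trans hmj)
      have h2 : 0 < davg w n i := L41.davg_pos hw (hsub.trans hmj)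
      have h3 := (L41.dlen_pos n).le
      positivity
    · simp only [hc, if_false]
      exact le_refl 0
  rw [ENNReal.tsum_eq_iSup_sum]
  apply iSup_le
  intro s
  -- restrict to the pairs where the condition holds
  set P : ℕ × ℕ → Prop := fun p =>
    dyad p.1 p.2 ⊆ dyad m j ∧
      q ^ (k + 1) ≤ davg v p.1 p.2 * davg w p.1 p.2 ∧
      davg v p.1 p.2 * davg w p.1 p.2 ≤ q ^ k with hPdef
  have hsum1 : ∑ p ∈ s, f p = ∑ p ∈ s.filter P, f p := by
    symm
    apply Finset.sum_filter_of_ne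
    intro p _ hfp
    by_contra hP
    apply hfp
    rw [hfdef]
    simp only [hP, if_false]
  have hsum2 : ∑ p ∈ s.filter P, f p
      = ∑ p ∈ s.filter P, ENNReal.ofReal (Fk p.1 p.2) := by
    apply Finset.sum_congr rfl
    intro p hp
    rw [Finset.mem_filter] at hp
    obtain ⟨_, hP⟩ := hp
    rw [hfdef, hFkdef]
    simp only [hP, hP.2, hP.1, and_true, and_self, if_true]
  have hsum3 : ∑ p ∈ s.filter P, ENNReal.ofReal (Fk p.1 p.2)
      = ENNReal.ofReal (∑ p ∈ s.filter P, Fk p.1 p.2) := by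
    rw [ENNReal.ofReal_sum_of_nonneg]
    intro p hp
    rw [Finset.mem_filter] at hp
    exact hFk0 p.1 p.2 hp.2.1
  rw [hsum1, hsum2, hsum3]
  apply ENNReal.ofReal_le_ofReal
  -- bound the real sum
  set N : ℕ := (s.filter P).sup (fun p => p.1) with hNdef
  have hsum4 : ∑ p ∈ s.filter P, Fk p.1 p.2 ≤ L41.Ssum Fk N m j := by
    apply L41.sum_le_Ssum
    · intro p hp
      have hp0 := hp
      rw [Finset.mem_filter] at hp
      refine ⟨hp.2.1, ?_⟩
      have : p.1 ≤ N := Finset.le_sup hp0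
      omega
    · exact hFk0
  have hmain := L41.main_bound q hq0 hq1 v w hv hw k N m j hmj
  calc ∑ p ∈ s.filter P, Fk p.1 p.2 ≤ L41.Ssum Fk N m j := hsum4
    _ ≤ B * dlen m := hmain

end
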